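/- In dimension d = 4, given the three real Latin MUBs (constructed from the three parallel classes of a (3,2)-net with the 2×2 Hadamard matrix), there is no unit vector y ∈ C^4 that is unbiased to all 12 basis vectors, i.e., with |⟨y, v⟩| = 1/2 for all vectors v in the three bases. -/

import Mathlib

/-- The three Latin MUBs in dimension 4 (rows, to be scaled by `1/√2`). -/
def latinMUB4 : Fin 3 → Matrix (Fin 4) (Fin 4) ℂ :=
  ![!![1, 1, 0, 0; 1, -1, 0, 0; 0, 0, 1, 1; 0, 0, 1, -1],
    !![1, 0, 1, 0; 1, 0, -1, 0; 0, 1, 0, 1; 0, 1, 0, -1],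
    !![1, 0, 0, 1; 1, 0, 0, -1; 0, 1, 1, 0; 0, 1, -1, 0]]

lemma keyAux (z : ℂ) (h : ‖(((Real.sqrt 2 : ℝ) : ℂ)⁻¹ * z)‖ = 2⁻¹) :
    Complex.normSq z = 1/2 := by
  have h2 : (0:ℝ) < Real.sqrt 2 := Real.sqrt_pos.mpr (by norm_num)
  rw [norm_mul] at h
  have habs : ‖(((Real.sqrt 2 : ℝ) : ℂ)⁻¹)‖ = (Real.sqrt 2)⁻¹ := by
    rw [norm_inv, Complex.norm_real, Real.norm_of_nonneg h2.le]
  rw [habs] at h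
  have hz : ‖z‖ = Real.sqrt 2 / 2 := by
    field_simp at h ⊢
    linarith
  have := Complex.sq_norm z
  rw [hz] at this
  rw [← this, div_pow, Real.sq_sqrt (by norm_num : (2:ℝ) ≥ 0)]
  norm_num


/-- In dimension 4, no unit vector `y ∈ ℂ⁴` is unbiased to all 12 vectors of
the three real Latin MUBs. -/
theorem latin_MUBs_dim_four_not_extendible :
    ¬ ∃ y : Fin 4 → ℂ,
      (∑ i, ‖y i‖ ^ 2 = 1) ∧
      (∀ (b : Fin 3) (r : Fin 4),
        ‖∑ i, star (latinMUB4 b r i / (Real.sqrt 2 : ℂ)) * y i‖ = 1 / 2) := by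
  rintro ⟨y, -, h⟩
  have h00 := h 0 0; have h01 := h 0 1
  have h10 := h 1 0; have h11 := h 1 1
  have h22 := h 2 2; have h23 := h 2 3
  simp [latinMUB4, Fin.sum_univ_four, Complex.star_def, map_div₀, Complex.conj_ofReal] at h00 h01 h10 h11 h22 h23
  rw [show ((Real.sqrt 2:ℝ):ℂ)⁻¹ * y 0 + ((Real.sqrt 2:ℝ):ℂ)⁻¹ * y 1 = ((Real.sqrt 2:ℝ):ℂ)⁻¹ * (y 0 + y 1) by ring] at h00
  rw [show ((Real.sqrt 2:ℝ):ℂ)⁻¹ * y 0 + -1/((Real.sqrt 2:ℝ):ℂ) * y 1 = ((Real.sqrt 2:ℝ):ℂ)⁻¹ * (y 0 - y 1) by ring] at h01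
  rw [show ((Real.sqrt 2:ℝ):ℂ)⁻¹ * y 0 + ((Real.sqrt 2:ℝ):ℂ)⁻¹ * y 2 = ((Real.sqrt 2:ℝ):ℂ)⁻¹ * (y 0 + y 2) by ring] at h10
  rw [show ((Real.sqrt 2:ℝ):ℂ)⁻¹ * y 0 + -1/((Real.sqrt 2:ℝ):ℂ) * y 2 = ((Real.sqrt 2:ℝ):ℂ)⁻¹ * (y 0 - y 2) by ring] at h11
  rw [show ((Real.sqrt 2:ℝ):ℂ)⁻¹ * y 1 + ((Real.sqrt 2:ℝ):ℂ)⁻¹ * y 2 = ((Real.sqrt 2:ℝ):ℂ)⁻¹ * (y 1 + y 2) by ring] at h22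
  rw [show ((Real.sqrt 2:ℝ):ℂ)⁻¹ * y 1 + -1/((Real.sqrt 2:ℝ):ℂ) * y 2 = ((Real.sqrt 2:ℝ):ℂ)⁻¹ * (y 1 - y 2) by ring] at h23
  have e1 := keyAux _ h00
  have e2 := keyAux _ h01
  have e3 := keyAux _ h10
  have e4 := keyAux _ h11
  have e5 := keyAux _ h22
  have e6 := keyAux _ h23
  simp only [Complex.normSq_apply, Complex.add_re, Complex.add_im, Complex.sub_re,
    Complex.sub_im] at e1 e2 e3 e4 e5 e6
  set a1 := (y 0).re; set a2 := (y 0).im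
  set b1 := (y 1).re; set b2 := (y 1).im
  set c1 := (y 2).re; set c2 := (y 2).im
  -- dot products zero
  have hab : a1*b1 + a2*b2 = 0 := by linear_combination (e1 - e2)/4
  have hac : a1*c1 + a2*c2 = 0 := by linear_combination (e3 - e4)/4
  have hbc : b1*c1 + b2*c2 = 0 := by linear_combination (e5 - e6)/4
  -- norms
  have hnab : a1^2+a2^2 + (b1^2+b2^2) = 1/2 := by linear_combination (e1 + e2)/2
  have hnac : a1^2+a2^2 + (c1^2+c2^2) = 1/2 := by linear_combination (e3 + e4)/2
  have hnbc : b1^2+b2^2 + (c1^2+c2^2) = 1/2 := by linear_combination (e5 + e6)/2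
  have hna : a1^2+a2^2 = 1/4 := by linarith
  have hnb : b1^2+b2^2 = 1/4 := by linarith
  have hnc : c1^2+c2^2 = 1/4 := by linarith
  have hp2 : (a1*b2 - a2*b1)^2 = 1/16 := by
    linear_combination (b1^2+b2^2)*hna + (1/4)*hnb - (a1*b1+a2*b2)*hab
  have hq2 : (a1*c2 - a2*c1)^2 = 1/16 := by
    linear_combination (c1^2+c2^2)*hna + (1/4)*hnc - (a1*c1+a2*c2)*hac
  have hpq : (a1*b2 - a2*b1) * (a1*c2 - a2*c1) = 0 := by
    linear_combination (a1^2+a2^2)*hbc - (a1*c1+a2*c2)*hab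
  have hcon : ((a1*b2 - a2*b1) * (a1*c2 - a2*c1))^2 = 1/256 := by
    linear_combination ((a1*c2-a2*c1)^2)*hp2 + (1/16)*hq2
  rw [hpq] at hcon
  norm_num at hcon
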